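/- Global error representation (intermediate identity in the proof of Theorem 3.2). Assume ψ : ℝ → E is twice differentiable with derivative φ and second derivative σ, that ψ, φ satisfy the one-step Duhamel relations ψ(t_{k+1}) = cos(hG) ψ(t_k) + G⁻¹ sin(hG) φ(t_k) + ∫₀ʰ G⁻¹ sin((h−τ)G)(m(t_k+τ)(ψ(t_k+τ))) dτ and φ(t_{k+1}) = −G sin(hG) ψ(t_k) + cos(hG) φ(t_k) + ∫₀ʰ cos((h−τ)G)(m(t_k+τ)(ψ(t_k+τ))) dτ for 0 ≤ k ≤ K−1, and let (ψ_k, ψ'_k) be the scheme Ξ^{[3]} started from ψ₀ := ψ(t₀), ψ'₀ := φ(t₀), ψ''₀ := σ(t₀). Define ε_k := ψ(t_k) − ψ_k, ε'_k := φ(t_k) − ψ'_k (so ε₀ = ε'₀ = 0; also set ε'_{−1} := 0), the Taylor defects E_l(τ) := ψ(t_l+τ) − ψ(t_l) − τ φ(t_l) − (τ²/2) σ(t_l), and \bar{E}₀ := 0, \bar{E}_l := σ(t_l) − (φ(t_l) − φ(t_{l−1}))/h for l ≥ 1. Then for every 1 ≤ k ≤ K: ε_k = Σ_{l=0}^{k−1}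 ∫₀ʰ G⁻¹ sin(((k−l)h−τ)G) (m(t_l+τ)(ε_l + τ(1 + τ/(2h)) ε'_l − (τ²/(2h)) ε'_{l−1} + (τ²/2) \bar{E}_l + E_l(τ))) dτ, and ε'_k = Σ_{l=0}^{k−1} ∫₀ʰ cos(((k−l)h−τ)G) (m(t_l+τ)(ε_l + τ(1 + τ/(2h)) ε'_l − (τ²/(2h)) ε'_{l−1} + (τ²/2) \bar{E}_l + E_l(τ))) dτ. -/

import Mathlib

/-- `cos(tG) := (exp(itG) + exp(−itG))/2` in a complex unital Banach algebra. -/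
noncomputable def opCos {A : Type*} [NormedRing A] [NormedAlgebra ℂ A] (t : ℝ) (G : A) : A :=
  (2 : ℂ)⁻¹ • (NormedSpace.exp (((t : ℂ) * Complex.I) • G) +
    NormedSpace.exp ((-(t : ℂ) * Complex.I) • G))

/-- `sin(tG) := (exp(itG) − exp(−itG))/(2i)` in a complex unital Banach algebra. -/
noncomputable def opSin {A : Type*} [NormedRing A] [NormedAlgebra ℂ A] (t : ℝ) (G : A) : A :=
  (2 * Complex.I)⁻¹ • (NormedSpace.exp (((t : ℂ) * Complex.I) • G) -
    NormedSpace.exp ((-(t : ℂ) * Complex.I) • G))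

namespace OpTrig

variable {A : Type*} [NormedRing A] [NormedAlgebra ℂ A] [CompleteSpace A]

noncomputable def eG (G : A) (t : ℝ) : A := NormedSpace.exp (((t : ℂ) * Complex.I) • G)

lemma eG_mul (G : A) (s t : ℝ) : eG G s * eG G t = eG G (s + t) := by
  letI : NormedAlgebra ℚ A := .restrictScalars ℚ ℂ A
  rw [eG, eG, eG, ← NormedSpace.exp_add_of_commute (((Commute.refl G).smul_left _).smul_right _)]
  congr 1
  rw [← add_smul]
  push_cast
  ring_nf

lemma opCos_eq (G : A) (t : ℝ) : opCos t G = (2 : ℂ)⁻¹ • (eG G t + eG G (-t)) := by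
  rw [opCos, eG, eG]
  push_cast
  ring_nf

lemma opSin_eq (G : A) (t : ℝ) : opSin t G = (2 * Complex.I)⁻¹ • (eG G t - eG G (-t)) := by
  rw [opSin, eG, eG]
  push_cast
  ring_nf

lemma opSin_add (G : A) (s t : ℝ) :
    opSin (s + t) G = opSin s G * opCos t G + opCos s G * opSin t G := by
  rw [opSin_eq, opSin_eq, opSin_eq, opCos_eq, opCos_eq, smul_mul_smul_comm, smul_mul_smul_comm,
    mul_comm ((2 : ℂ)⁻¹) ((2 * Complex.I)⁻¹), ← smul_add]
  have key : (eG G s - eG G (-s)) * (eG G t + eG G (-t)) +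
      (eG G s + eG G (-s)) * (eG G t - eG G (-t)) =
      (2 : ℂ) • (eG G (s + t) - eG G (-(s + t))) := by
    simp only [sub_mul, add_mul, mul_add, mul_sub, eG_mul, smul_sub, two_smul, neg_add]
    abel
  rw [key, smul_smul]
  congr 1
  have : Complex.I ≠ 0 := Complex.I_ne_zero
  field_simp

lemma opCos_add (G : A) (s t : ℝ) :
    opCos (s + t) G = opCos s G * opCos t G - opSin s G * opSin t G := by
  rw [opCos_eq, opCos_eq, opCos_eq, opSin_eq, opSin_eq, smul_mul_smul_comm, smul_mul_smul_comm]
  have hc : ((2 * Complex.I)⁻¹ * (2 * Complex.I)⁻¹) = -((2 : ℂ)⁻¹ * 2⁻¹) := by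
    have : Complex.I ≠ 0 := Complex.I_ne_zero
    field_simp
    rw [Complex.I_sq]
    ring
  rw [hc, neg_smul, sub_neg_eq_add, ← smul_add]
  have key : (eG G s + eG G (-s)) * (eG G t + eG G (-t)) +
      (eG G s - eG G (-s)) * (eG G t - eG G (-t)) =
      (2 : ℂ) • (eG G (s + t) + eG G (-(s + t))) := by
    simp only [sub_mul, add_mul, mul_add, mul_sub, eG_mul, smul_add, two_smul, neg_add]
    abel
  rw [key, smul_smul]
  congr 1
  norm_num

lemma commute_eG {B G : A} (hc : Commute B G) (t : ℝ) : Commute B (eG G t) :=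
  (hc.smul_right _).exp_right

lemma commute_opCos {B G : A} (hc : Commute B G) (t : ℝ) : Commute B (opCos t G) := by
  rw [opCos_eq]
  exact ((commute_eG hc t).add_right (commute_eG hc (-t))).smul_right _

lemma commute_opSin {B G : A} (hc : Commute B G) (t : ℝ) : Commute B (opSin t G) := by
  rw [opSin_eq]
  exact ((commute_eG hc t).sub_right (commute_eG hc (-t))).smul_right _

lemma continuous_eG' (G : A) (c : ℂ) :
    Continuous fun t : ℝ => NormedSpace.exp ((c * (t : ℂ) * Complex.I) • G) :=
  letI : NormedAlgebra ℚ A := .restrictScalars ℚ ℂ A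
  NormedSpace.exp_continuous.comp
    (((continuous_const.mul Complex.continuous_ofReal).mul continuous_const).smul
      continuous_const)

lemma continuous_opSin (G : A) : Continuous fun t : ℝ => opSin t G := by
  simp only [opSin]
  apply Continuous.const_smul
  apply Continuous.sub
  · have := continuous_eG' G 1
    simpa using this
  · have := continuous_eG' G (-1)
    simpa [neg_mul] using this

lemma continuous_opCos (G : A) : Continuous fun t : ℝ => opCos t G := by
  simp only [opCos]
  apply Continuous.const_smul
  apply Continuous.add
  · have := continuous_eG' G 1
    simpa using this
  · have := continuous_eG' G (-1)
    simpa [neg_mul] using this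

end OpTrig

section Aux

open intervalIntegral OpTrig

variable {E : Type*} [NormedAddCommGroup E] [NormedSpace ℂ E] [CompleteSpace E]

lemma mul_apply₃ (f g : E →L[ℂ] E) (v : E) : (f * g) v = f (g v) := rfl

lemma aux_rep (G Ginv : E →L[ℂ] E) (hGr : G * Ginv = 1) (hGl : Ginv * G = 1)
    (h : ℝ) (K : ℕ) (w : ℕ → ℝ → E) (hw : ∀ l, Continuous (w l))
    (e e' : ℕ → E) (he0 : e 0 = 0) (he'0 : e' 0 = 0)
    (hrec : ∀ k, k < K → e (k + 1) = opCos h G (e k) + Ginv (opSin h G (e' k)) +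
        ∫ τ in (0:ℝ)..h, Ginv (opSin (h - τ) G (w k τ)))
    (hrec' : ∀ k, k < K → e' (k + 1) = -(G (opSin h G (e k))) + opCos h G (e' k) +
        ∫ τ in (0:ℝ)..h, opCos (h - τ) G (w k τ)) :
    ∀ k, k ≤ K →
      e k = (∑ l ∈ Finset.range k, ∫ τ in (0:ℝ)..h,
          Ginv (opSin (((k : ℝ) - l) * h - τ) G (w l τ))) ∧
      e' k = ∑ l ∈ Finset.range k, ∫ τ in (0:ℝ)..h,
          opCos (((k : ℝ) - l) * h - τ) G (w l τ) := by
  -- commutation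
  have hcomm : Commute Ginv G := by unfold Commute SemiconjBy; rw [hGl, hGr]
  -- continuity / integrability of all integrands
  have cS : ∀ (s : ℝ) (l : ℕ), Continuous fun τ : ℝ => opSin (s - τ) G (w l τ) := fun s l =>
    Continuous.clm_apply ((continuous_opSin G).comp (continuous_const.sub continuous_id)) (hw l)
  have cC : ∀ (s : ℝ) (l : ℕ), Continuous fun τ : ℝ => opCos (s - τ) G (w l τ) := fun s l =>
    Continuous.clm_apply ((continuous_opCos G).comp (continuous_const.sub continuous_id)) (hw l)
  have iS : ∀ (s : ℝ) (l : ℕ),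
      IntervalIntegrable (fun τ : ℝ => Ginv (opSin (s - τ) G (w l τ))) MeasureTheory.volume 0 h :=
    fun s l => (Ginv.continuous.comp (cS s l)).intervalIntegrable 0 h
  have iC : ∀ (s : ℝ) (l : ℕ),
      IntervalIntegrable (fun τ : ℝ => opCos (s - τ) G (w l τ)) MeasureTheory.volume 0 h :=
    fun s l => (cC s l).intervalIntegrable 0 h
  have iSS : ∀ (L M : E →L[ℂ] E) (s : ℝ) (l : ℕ),
      IntervalIntegrable (fun τ : ℝ => L (M (opSin (s - τ) G (w l τ)))) MeasureTheory.volume 0 h :=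
    fun L M s l => ((L.continuous.comp (M.continuous.comp (cS s l))).intervalIntegrable 0 h)
  have iCC : ∀ (L M : E →L[ℂ] E) (s : ℝ) (l : ℕ),
      IntervalIntegrable (fun τ : ℝ => L (M (opCos (s - τ) G (w l τ)))) MeasureTheory.volume 0 h :=
    fun L M s l => ((L.continuous.comp (M.continuous.comp (cC s l))).intervalIntegrable 0 h)
  have iSSS : ∀ (L M N : E →L[ℂ] E) (s : ℝ) (l : ℕ),
      IntervalIntegrable (fun τ : ℝ => -(L (M (N (opSin (s - τ) G (w l τ))))))
        MeasureTheory.volume 0 h :=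
    fun L M N s l =>
      (((L.continuous.comp (M.continuous.comp (N.continuous.comp (cS s l)))).neg).intervalIntegrable 0 h)
  have iC1 : ∀ (L : E →L[ℂ] E) (s : ℝ) (l : ℕ),
      IntervalIntegrable (fun τ : ℝ => L (opCos (s - τ) G (w l τ))) MeasureTheory.volume 0 h :=
    fun L s l => ((L.continuous.comp (cC s l)).intervalIntegrable 0 h)
  -- operator identities
  have key1 : ∀ s : ℝ, opCos h G * (Ginv * opSin s G) + Ginv * (opSin h G * opCos s G) =
      Ginv * opSin (h + s) G := by
    intro s
    rw [← mul_assoc, ← (commute_opCos hcomm h).eq, mul_assoc, ← mul_add,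
      add_comm (opCos h G * opSin s G), ← opSin_add]
  have key2 : ∀ s : ℝ, -(G * (opSin h G * (Ginv * opSin s G))) + opCos h G * opCos s G =
      opCos (h + s) G := by
    intro s
    have h1 : G * (opSin h G * (Ginv * opSin s G)) = opSin h G * opSin s G := by
      rw [← mul_assoc, (commute_opSin (Commute.refl G) h).eq, mul_assoc, ← mul_assoc G Ginv,
        hGr, one_mul]
    rw [h1, opCos_add]
    abel
  -- pointwise versions
  have key1' : ∀ (s : ℝ) (v : E),
      opCos h G (Ginv (opSin s G v)) + Ginv (opSin h G (opCos s G v)) =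
        Ginv (opSin (h + s) G v) := by
    intro s v
    have := congrArg (fun T : E →L[ℂ] E => T v) (key1 s)
    simpa [mul_apply₃] using this
  have key2' : ∀ (s : ℝ) (v : E),
      -(G (opSin h G (Ginv (opSin s G v)))) + opCos h G (opCos s G v) =
        opCos (h + s) G v := by
    intro s v
    have := congrArg (fun T : E →L[ℂ] E => T v) (key2 s)
    simpa [mul_apply₃] using this
  -- per-term step identities
  have term1 : ∀ (l : ℕ) (s : ℝ),
      opCos h G (∫ τ in (0:ℝ)..h, Ginv (opSin (s - τ) G (w l τ))) +
        Ginv (opSin h G (∫ τ in (0:ℝ)..h, opCos (s - τ) G (w l τ))) =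
      ∫ τ in (0:ℝ)..h, Ginv (opSin ((h + s) - τ) G (w l τ)) := by
    intro l s
    rw [← (opCos h G).intervalIntegral_comp_comm (iS s l)]
    have h2 := (Ginv.comp (opSin h G)).intervalIntegral_comp_comm (iC s l)
    simp only [ContinuousLinearMap.comp_apply] at h2
    rw [← h2, ← intervalIntegral.integral_add (iSS (opCos h G) Ginv s l) (iCC Ginv (opSin h G) s l)]
    apply intervalIntegral.integral_congr
    intro τ _
    have := key1' (s - τ) (w l τ)
    convert this using 4
    ring
  have term2 : ∀ (l : ℕ) (s : ℝ),
      -(G (opSin h G (∫ τ in (0:ℝ)..h, Ginv (opSin (s - τ) G (w l τ))))) +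
        opCos h G (∫ τ in (0:ℝ)..h, opCos (s - τ) G (w l τ)) =
      ∫ τ in (0:ℝ)..h, opCos ((h + s) - τ) G (w l τ) := by
    intro l s
    have h3 := (G.comp (opSin h G)).intervalIntegral_comp_comm (iS s l)
    simp only [ContinuousLinearMap.comp_apply] at h3
    rw [← h3, ← (opCos h G).intervalIntegral_comp_comm (iC s l),
      ← intervalIntegral.integral_neg,
      ← intervalIntegral.integral_add (iSSS G (opSin h G) Ginv s l) (iC1 (opCos h G) s l)]
    apply intervalIntegral.integral_congr
    intro τ _
    have := key2' (s - τ) (w l τ)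
    convert this using 3
    ring
  -- the induction
  intro k
  induction k with
  | zero => intro _; simpa using ⟨he0, he'0⟩
  | succ k ih =>
    intro hkK
    have hk : k < K := hkK
    obtain ⟨H, H'⟩ := ih hk.le
    constructor
    · rw [hrec k hk, H, H', Finset.sum_range_succ]
      simp only [map_sum]
      rw [← Finset.sum_add_distrib]
      push_cast
      congr 1
      · apply Finset.sum_congr rfl
        intro l _
        rw [term1 l (((k:ℝ) - l) * h)]
        apply intervalIntegral.integral_congr
        intro τ _
        beta_reduce
        rw [show h + ((k:ℝ) - l) * h - τ = ((k:ℝ) + 1 - l) * h - τ by ring]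
      · apply intervalIntegral.integral_congr
        intro τ _
        beta_reduce
        rw [show ((k:ℝ) + 1 - (k:ℕ)) * h - τ = h - τ by push_cast; ring]
    · rw [hrec' k hk, H, H', Finset.sum_range_succ]
      simp only [map_sum, ← Finset.sum_neg_distrib]
      rw [← Finset.sum_add_distrib]
      push_cast
      congr 1
      · apply Finset.sum_congr rfl
        intro l _
        rw [term2 l (((k:ℝ) - l) * h)]
        apply intervalIntegral.integral_congr
        intro τ _
        beta_reduce
        rw [show h + ((k:ℝ) - l) * h - τ = ((k:ℝ) + 1 - l) * h - τ by ring]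
      · apply intervalIntegral.integral_congr
        intro τ _
        beta_reduce
        rw [show ((k:ℝ) + 1 - (k:ℕ)) * h - τ = h - τ by push_cast; ring]

end Aux

set_option maxHeartbeats 2000000 in
open OpTrig in
/-- **global error representation, proof of Theorem 3.2.**
With `ε k := ψ(t_k) − Ψ k`, `ε' k := φ(t_k) − Ψ' k`, the Taylor defects
`E_l(τ) := ψ(t_l+τ) − ψ(t_l) − τ φ(t_l) − (τ²/2) σ(t_l)` and
`Ē_0 := 0`, `Ē_l := σ(t_l) − (φ(t_l) − φ(t_{l−1}))/h` for `l ≥ 1`, the global errors of the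
scheme Ξ³ admit the stated sum representation for all `1 ≤ k ≤ K`.  (Note `ε'₀ = 0`, so the
convention `ε'_{−1} := 0` agrees with truncated subtraction on indices.) -/
theorem global_error_representation
    {E : Type*} [NormedAddCommGroup E] [NormedSpace ℂ E] [CompleteSpace E]
    (G Ginv : E →L[ℂ] E) (hGr : G * Ginv = 1) (hGl : Ginv * G = 1)
    (t₀ h : ℝ) (hh : 0 < h) (K : ℕ) (hK : 1 ≤ K)
    (m : ℝ → (E →L[ℂ] E)) (hm : Continuous m)
    (ψ φ σ : ℝ → E)
    (hdψ : ∀ t : ℝ, HasDerivAt ψ (φ t) t) (hdφ : ∀ t : ℝ, HasDerivAt φ (σ t) t)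
    -- one-step Duhamel relations for the exact solution
    (hstepψ : ∀ k : ℕ, k ≤ K - 1 →
      ψ (t₀ + ((k : ℝ) + 1) * h) =
        opCos h G (ψ (t₀ + k * h)) + Ginv (opSin h G (φ (t₀ + k * h))) +
          ∫ τ in (0:ℝ)..h,
            Ginv (opSin (h - τ) G (m (t₀ + k * h + τ) (ψ (t₀ + k * h + τ)))))
    (hstepφ : ∀ k : ℕ, k ≤ K - 1 →
      φ (t₀ + ((k : ℝ) + 1) * h) =
        -(G (opSin h G (ψ (t₀ + k * h)))) + opCos h G (φ (t₀ + k * h)) +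
          ∫ τ in (0:ℝ)..h,
            opCos (h - τ) G (m (t₀ + k * h + τ) (ψ (t₀ + k * h + τ))))
    -- the numerical scheme Ξ³ started from the exact data
    (Ψ Ψ' : ℕ → E) (hΨ0 : Ψ 0 = ψ t₀) (hΨ'0 : Ψ' 0 = φ t₀)
    (hΨ1 : Ψ 1 = opCos h G (ψ t₀) + Ginv (opSin h G (φ t₀)) +
      ∫ τ in (0:ℝ)..h,
        Ginv (opSin (h - τ) G (m (t₀ + τ)
          (ψ t₀ + τ • φ t₀ + (τ ^ 2 / 2) • σ t₀))))
    (hΨ'1 : Ψ' 1 = -(G (opSin h G (ψ t₀))) + opCos h G (φ t₀) +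
      ∫ τ in (0:ℝ)..h,
        opCos (h - τ) G (m (t₀ + τ)
          (ψ t₀ + τ • φ t₀ + (τ ^ 2 / 2) • σ t₀)))
    (hΨstep : ∀ k : ℕ, 1 ≤ k → k ≤ K - 1 →
      Ψ (k + 1) = opCos h G (Ψ k) + Ginv (opSin h G (Ψ' k)) +
        ∫ τ in (0:ℝ)..h,
          Ginv (opSin (h - τ) G (m (t₀ + k * h + τ)
            (Ψ k + τ • Ψ' k + (τ ^ 2 / (2 * h)) • (Ψ' k - Ψ' (k - 1))))))
    (hΨ'step : ∀ k : ℕ, 1 ≤ k → k ≤ K - 1 →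
      Ψ' (k + 1) = -(G (opSin h G (Ψ k))) + opCos h G (Ψ' k) +
        ∫ τ in (0:ℝ)..h,
          opCos (h - τ) G (m (t₀ + k * h + τ)
            (Ψ k + τ • Ψ' k + (τ ^ 2 / (2 * h)) • (Ψ' k - Ψ' (k - 1))))) :
    ∀ k : ℕ, 1 ≤ k → k ≤ K →
      (ψ (t₀ + k * h) - Ψ k =
        ∑ l ∈ Finset.range k,
          ∫ τ in (0:ℝ)..h,
            Ginv (opSin (((k : ℝ) - l) * h - τ) G
              (m (t₀ + l * h + τ)
                ((ψ (t₀ + l * h) - Ψ l) +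
                  (τ * (1 + τ / (2 * h))) • (φ (t₀ + l * h) - Ψ' l) -
                  (τ ^ 2 / (2 * h)) • (φ (t₀ + (l - 1 : ℕ) * h) - Ψ' (l - 1)) +
                  (τ ^ 2 / 2) •
                    (if l = 0 then (0 : E) else
                      σ (t₀ + l * h) - h⁻¹ • (φ (t₀ + l * h) - φ (t₀ + ((l : ℝ) - 1) * h))) +
                  (ψ (t₀ + l * h + τ) - ψ (t₀ + l * h) - τ • φ (t₀ + l * h) -
                    (τ ^ 2 / 2) • σ (t₀ + l * h)))))) ∧
      (φ (t₀ + k * h) - Ψ' k =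
        ∑ l ∈ Finset.range k,
          ∫ τ in (0:ℝ)..h,
            opCos (((k : ℝ) - l) * h - τ) G
              (m (t₀ + l * h + τ)
                ((ψ (t₀ + l * h) - Ψ l) +
                  (τ * (1 + τ / (2 * h))) • (φ (t₀ + l * h) - Ψ' l) -
                  (τ ^ 2 / (2 * h)) • (φ (t₀ + (l - 1 : ℕ) * h) - Ψ' (l - 1)) +
                  (τ ^ 2 / 2) •
                    (if l = 0 then (0 : E) else
                      σ (t₀ + l * h) - h⁻¹ • (φ (t₀ + l * h) - φ (t₀ + ((l : ℝ) - 1) * h))) +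
                  (ψ (t₀ + l * h + τ) - ψ (t₀ + l * h) - τ • φ (t₀ + l * h) -
                    (τ ^ 2 / 2) • σ (t₀ + l * h))))) := by
  have hh' : h ≠ 0 := hh.ne'
  have cψ : Continuous ψ := continuous_iff_continuousAt.mpr fun t => (hdψ t).continuousAt
  have cφ : Continuous φ := continuous_iff_continuousAt.mpr fun t => (hdφ t).continuousAt
  have hSc : Continuous fun t : ℝ => opSin t G := continuous_opSin G
  have hCc : Continuous fun t : ℝ => opCos t G := continuous_opCos G
  have rearr : ∀ a b c a' b' c' : E, (a + b + c) - (a' + b' + c') =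
      (a - a') + (b - b') + (c - c') := fun a b c a' b' c' => by abel
  intro k hk1 hkK
  refine aux_rep G Ginv hGr hGl h K
    (fun l τ => m (t₀ + l * h + τ)
      ((ψ (t₀ + l * h) - Ψ l) +
        (τ * (1 + τ / (2 * h))) • (φ (t₀ + l * h) - Ψ' l) -
        (τ ^ 2 / (2 * h)) • (φ (t₀ + (l - 1 : ℕ) * h) - Ψ' (l - 1)) +
        (τ ^ 2 / 2) •
          (if l = 0 then (0 : E) else
            σ (t₀ + l * h) - h⁻¹ • (φ (t₀ + l * h) - φ (t₀ + ((l : ℝ) - 1) * h))) +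
        (ψ (t₀ + l * h + τ) - ψ (t₀ + l * h) - τ • φ (t₀ + l * h) -
          (τ ^ 2 / 2) • σ (t₀ + l * h)))) ?_
    (fun k => ψ (t₀ + k * h) - Ψ k) (fun k => φ (t₀ + k * h) - Ψ' k) ?_ ?_ ?_ ?_ k hkK
  · -- continuity of w l
    intro l
    apply Continuous.clm_apply (hm.comp (by continuity))
    fun_prop
  · simp [hΨ0]
  · simp [hΨ'0]
  · -- recursion for e
    intro n hnK
    beta_reduce
    rcases Nat.eq_zero_or_pos n with hn0 | hn1
    · subst hn0
      have hψ := hstepψ 0 (by omega)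
      norm_num [hΨ0, hΨ'0] at hψ ⊢
      rw [hψ, hΨ1, show ∀ a b c d : E, (a + b + c) - (a + b + d) = c - d from
        fun a b c d => by abel]
      have hf : IntervalIntegrable
          (fun τ : ℝ => Ginv ((opSin (h - τ) G) ((m (t₀ + τ)) (ψ (t₀ + τ)))))
          MeasureTheory.volume 0 h := (Continuous.intervalIntegrable (by fun_prop) 0 h)
      have hg : IntervalIntegrable
          (fun τ : ℝ => Ginv ((opSin (h - τ) G) ((m (t₀ + τ))
            (ψ t₀ + τ • φ t₀ + (τ ^ 2 / 2) • σ t₀))))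
          MeasureTheory.volume 0 h := (Continuous.intervalIntegrable (by fun_prop) 0 h)
      rw [← intervalIntegral.integral_sub hf hg]
      apply intervalIntegral.integral_congr
      intro τ _
      beta_reduce
      simp only [map_add, ContinuousLinearMap.map_smul_of_tower, map_sub]
      abel
    · have hψ := hstepψ n (by omega)
      have hs := hΨstep n hn1 (by omega)
      push_cast
      rw [hψ, hs, rearr]
      congr 1
      congr 1
      · exact (map_sub (opCos h G) _ _).symm
      · rw [← map_sub, ← map_sub]
      have hf : IntervalIntegrable
          (fun τ : ℝ => Ginv ((opSin (h - τ) G) ((m (t₀ + ↑n * h + τ))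
            (ψ (t₀ + ↑n * h + τ)))))
          MeasureTheory.volume 0 h := (Continuous.intervalIntegrable (by fun_prop) 0 h)
      have hg : IntervalIntegrable
          (fun τ : ℝ => Ginv ((opSin (h - τ) G) ((m (t₀ + ↑n * h + τ))
            (Ψ n + τ • Ψ' n + (τ ^ 2 / (2 * h)) • (Ψ' n - Ψ' (n - 1))))))
          MeasureTheory.volume 0 h := (Continuous.intervalIntegrable (by fun_prop) 0 h)
      rw [← intervalIntegral.integral_sub hf hg]
      apply intervalIntegral.integral_congr
      intro τ _
      beta_reduce
      rw [← map_sub, ← map_sub, ← map_sub]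
      refine congrArg _ (congrArg _ (congrArg _ ?_))
      rw [if_neg (by omega), Nat.cast_sub hn1, Nat.cast_one]
      match_scalars <;> field_simp <;> ring
  · -- recursion for e'
    intro n hnK
    beta_reduce
    rcases Nat.eq_zero_or_pos n with hn0 | hn1
    · subst hn0
      have hφ := hstepφ 0 (by omega)
      norm_num [hΨ0, hΨ'0] at hφ ⊢
      rw [hφ, hΨ'1, show ∀ a b c d : E, (a + b + c) - (a + b + d) = c - d from
        fun a b c d => by abel]
      have hf : IntervalIntegrable
          (fun τ : ℝ => (opCos (h - τ) G) ((m (t₀ + τ)) (ψ (t₀ + τ))))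
          MeasureTheory.volume 0 h := (Continuous.intervalIntegrable (by fun_prop) 0 h)
      have hg : IntervalIntegrable
          (fun τ : ℝ => (opCos (h - τ) G) ((m (t₀ + τ))
            (ψ t₀ + τ • φ t₀ + (τ ^ 2 / 2) • σ t₀)))
          MeasureTheory.volume 0 h := (Continuous.intervalIntegrable (by fun_prop) 0 h)
      rw [← intervalIntegral.integral_sub hf hg]
      apply intervalIntegral.integral_congr
      intro τ _
      beta_reduce
      simp only [map_add, ContinuousLinearMap.map_smul_of_tower, map_sub]
      abel
    · have hφ := hstepφ n (by omega)
      have hs := hΨ'step n hn1 (by omega)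
      push_cast
      rw [hφ, hs, rearr]
      congr 1
      congr 1
      · simp only [map_sub]
        abel
      · rw [← map_sub]
      have hf : IntervalIntegrable
          (fun τ : ℝ => (opCos (h - τ) G) ((m (t₀ + ↑n * h + τ))
            (ψ (t₀ + ↑n * h + τ))))
          MeasureTheory.volume 0 h := (Continuous.intervalIntegrable (by fun_prop) 0 h)
      have hg : IntervalIntegrable
          (fun τ : ℝ => (opCos (h - τ) G) ((m (t₀ + ↑n * h + τ))
            (Ψ n + τ • Ψ' n + (τ ^ 2 / (2 * h)) • (Ψ' n - Ψ' (n - 1)))))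
          MeasureTheory.volume 0 h := (Continuous.intervalIntegrable (by fun_prop) 0 h)
      rw [← intervalIntegral.integral_sub hf hg]
      apply intervalIntegral.integral_congr
      intro τ _
      beta_reduce
      rw [← map_sub, ← map_sub]
      refine congrArg _ (congrArg _ ?_)
      rw [if_neg (by omega), Nat.cast_sub hn1, Nat.cast_one]
      match_scalars <;> field_simp <;> ring
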